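/- Let W : G → ℂ satisfy W(u·g) = ψ(u)·W(g) for all u ∈ N, g ∈ G, and W(g·j) = W(g) for all g ∈ G, j ∈ J, and assume the sign Hecke relations: for every 1 ≤ i < n and every g ∈ G, ∑_{t=0}^{p-1} W(g·x_i(t)·w_{s_i}) = -W(g). Then for every σ ∈ S_n and every d ∈ T⁺, W(d·w_σ) = (-p)^{-ℓ(σ)}·W(d). -/

import Mathlib

open Matrix MeasureTheory Pointwise

variable (p n : ℕ) [Fact p.Prime]

/-- The `(i,j)` entry of an element of `GL n ℚ_[p]`. -/
def entry (g : GL (Fin n) ℚ_[p]) (i j : Fin n) : ℚ_[p] :=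
  (g : Matrix (Fin n) (Fin n) ℚ_[p]) i j

/-- The Iwahori subgroup `J`, as a subset of `GL n ℚ_[p]`: matrices of `GL_n(ℤ_p)`
(integral matrix with integral inverse) whose entries strictly below the diagonal
lie in `pℤ_p` (i.e. have norm `< 1`). -/
def Jset : Set (GL (Fin n) ℚ_[p]) :=
  {g | (∀ i j, ‖entry p n g i j‖ ≤ 1) ∧ (∀ i j, ‖entry p n g⁻¹ i j‖ ≤ 1) ∧
       ∀ i j : Fin n, j < i → ‖entry p n g i j‖ < 1}

/-- The diagonal torus `T`. -/
def Tset : Set (GL (Fin n) ℚ_[p]) :=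
  {g | ∀ i j : Fin n, i ≠ j → entry p n g i j = 0}

/-- The group `N` of upper unitriangular matrices. -/
def Nset : Set (GL (Fin n) ℚ_[p]) :=
  {g | (∀ i : Fin n, entry p n g i i = 1) ∧ ∀ i j : Fin n, j < i → entry p n g i j = 0}

/-- The upper triangular Borel subgroup `B`. -/
def Bset : Set (GL (Fin n) ℚ_[p]) :=
  {g | ∀ i j : Fin n, j < i → entry p n g i j = 0}

/-- Permutation matrix `w_σ` of `σ` as an element of `GL n ℚ_[p]`, in the convention
`w_σ · e_j = e_{σ(j)}` (entries `(w_σ)_{ij} = δ_{i, σ(j)}`). -/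
noncomputable def permGL (σ : Equiv.Perm (Fin n)) : GL (Fin n) ℚ_[p] :=
  Matrix.GeneralLinearGroup.mkOfDetNeZero ((σ.permMatrix ℚ_[p])ᵀ) (by
    rw [Matrix.det_transpose, Matrix.det_permutation]
    exact_mod_cast Int.cast_ne_zero.mpr (Equiv.Perm.sign σ).ne_zero)

/-- The elementary matrix `I + t·E_{ij}` as an element of `GL n ℚ_[p]`. -/
noncomputable def elemGL (i j : Fin n) (hij : i ≠ j) (t : ℚ_[p]) : GL (Fin n) ℚ_[p] :=
  Matrix.GeneralLinearGroup.mkOfDetNeZero (Matrix.transvection i j t) (by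
    rw [Matrix.det_transvection_of_ne i j hij]
    exact one_ne_zero)

/-- The set of inversions `Inv(σ) = {(i,j) : i < j, σ⁻¹ i > σ⁻¹ j}`. -/
def InvSet (σ : Equiv.Perm (Fin n)) : Finset (Fin n × Fin n) :=
  Finset.univ.filter fun ij => ij.1 < ij.2 ∧ σ⁻¹ ij.2 < σ⁻¹ ij.1

/-- The length `ℓ(σ)` (number of inversions) of `σ`. -/
def len (σ : Equiv.Perm (Fin n)) : ℕ := (InvSet n σ).card

/-- `i+1` as an element of `Fin n`. -/
def finSucc (i : Fin n) (h : (i : ℕ) + 1 < n) : Fin n := ⟨(i : ℕ) + 1, h⟩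

theorem finSucc_ne (i : Fin n) (h : (i : ℕ) + 1 < n) : i ≠ finSucc n i h := by
  simp [finSucc, Fin.ext_iff]

/-- The value of `χδ_B` at `b`, defined through the diagonal entries of `b`:
`(χδ_B)(b) = ∏_{i=1}^n z_i^{v(b_i)} p^{-(n+1-2i) v(b_i)}`. -/
noncomputable def chiDelta (z : Fin n → ℂˣ) (d : GL (Fin n) ℚ_[p]) : ℂ :=
  ∏ i : Fin n, ((z i : ℂ) ^ (entry p n d i i).valuation *
    (p : ℂ) ^ (-(((n : ℤ) + 1) - 2 * ((i : ℕ) + 1 : ℤ)) * (entry p n d i i).valuation))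

/-- The character `ψ(u) = ∏_{i=1}^{n-1} ψ₀(u_{i,i+1})` of `N`, built from an additive
character `ψ₀` of `ℚ_p`. -/
noncomputable def psiN (ψ₀ : ℚ_[p] → ℂ) (u : GL (Fin n) ℚ_[p]) : ℂ :=
  ∏ i : Fin n, if h : (i : ℕ) + 1 < n then ψ₀ (entry p n u i (finSucc n i h)) else 1

/-- `λ(d)` is `σ`-dominant: for all adjacent indices,
`v(d_i) - v(d_{i+1}) ≥ 0` if `σ⁻¹ i < σ⁻¹(i+1)`, and `≥ -1` if `σ⁻¹ i > σ⁻¹(i+1)`. -/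
def IsDom (σ : Equiv.Perm (Fin n)) (d : GL (Fin n) ℚ_[p]) : Prop :=
  ∀ (i : Fin n) (h : (i : ℕ) + 1 < n),
    (σ⁻¹ i < σ⁻¹ (finSucc n i h) →
      0 ≤ (entry p n d i i).valuation
            - (entry p n d (finSucc n i h) (finSucc n i h)).valuation) ∧
    (σ⁻¹ (finSucc n i h) < σ⁻¹ i →
      -1 ≤ (entry p n d i i).valuation
            - (entry p n d (finSucc n i h) (finSucc n i h)).valuation)

/-- The dominant part `T⁺` of the diagonal torus: `v(d_1) ≥ … ≥ v(d_n)`. -/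
def Tplus : Set (GL (Fin n) ℚ_[p]) :=
  {d | d ∈ Tset p n ∧ Antitone fun i : Fin n => (entry p n d i i).valuation}

/-- The double coset `J g J`. -/
def dcos (g : GL (Fin n) ℚ_[p]) : Set (GL (Fin n) ℚ_[p]) :=
  {x | ∃ a ∈ Jset p n, ∃ b ∈ Jset p n, x = a * g * b}


/-! ### Auxiliary lemmas -/

section Aux

lemma permT_apply (τ : Equiv.Perm (Fin n)) (x y : Fin n) :
    (τ.permMatrix ℚ_[p])ᵀ x y = if x = τ y then 1 else 0 := by
  simp [Equiv.Perm.permMatrix, PEquiv.toMatrix, Equiv.toPEquiv, Option.mem_def, eq_comm]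

lemma mul_permT (τ : Equiv.Perm (Fin n)) (M : Matrix (Fin n) (Fin n) ℚ_[p]) (x y : Fin n) :
    (M * (τ.permMatrix ℚ_[p])ᵀ) x y = M x (τ y) := by
  rw [Matrix.mul_apply, Finset.sum_eq_single (τ y)]
  · rw [permT_apply, if_pos rfl, mul_one]
  · intro k _ hk
    rw [permT_apply, if_neg hk, mul_zero]
  · intro h
    exact absurd (Finset.mem_univ _) h

lemma permGL_coe (τ : Equiv.Perm (Fin n)) :
    (permGL p n τ : Matrix (Fin n) (Fin n) ℚ_[p]) = (τ.permMatrix ℚ_[p])ᵀ := rfl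

lemma elemGL_coe (i j : Fin n) (hij : i ≠ j) (t : ℚ_[p]) :
    (elemGL p n i j hij t : Matrix (Fin n) (Fin n) ℚ_[p]) = Matrix.transvection i j t := rfl

lemma permGL_mul (τ₁ τ₂ : Equiv.Perm (Fin n)) :
    permGL p n τ₁ * permGL p n τ₂ = permGL p n (τ₁ * τ₂) := by
  apply Units.ext
  rw [Units.val_mul, permGL_coe, permGL_coe, permGL_coe, ← Matrix.transpose_mul]
  congr 1
  have : (Equiv.Perm.permMatrix ℚ_[p] τ₂ * Equiv.Perm.permMatrix ℚ_[p] τ₁)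
      = ((τ₂.toPEquiv.trans τ₁.toPEquiv).toMatrix : Matrix (Fin n) (Fin n) ℚ_[p]) :=
    (PEquiv.toMatrix_trans _ _).symm
  rw [this, ← Equiv.toPEquiv_trans]
  rfl

lemma permGL_one : permGL p n 1 = 1 := by
  apply Units.ext
  rw [permGL_coe]
  show ((Equiv.refl (Fin n)).toPEquiv.toMatrix : Matrix (Fin n) (Fin n) ℚ_[p])ᵀ = 1
  rw [Equiv.toPEquiv_refl, PEquiv.toMatrix_refl, Matrix.transpose_one]

lemma elemGL_mul_neg (i j : Fin n) (hij : i ≠ j) (t : ℚ_[p]) :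
    elemGL p n i j hij t * elemGL p n i j hij (-t) = 1 := by
  apply Units.ext
  rw [Units.val_mul, elemGL_coe, elemGL_coe, Matrix.transvection_mul_transvection_same (h := hij),
    add_neg_cancel, Matrix.transvection_zero]
  rfl

lemma elemGL_inv (i j : Fin n) (hij : i ≠ j) (t : ℚ_[p]) :
    (elemGL p n i j hij t)⁻¹ = elemGL p n i j hij (-t) :=
  inv_eq_of_mul_eq_one_right (elemGL_mul_neg p n i j hij t)

lemma elemGL_zero (i j : Fin n) (hij : i ≠ j) :
    elemGL p n i j hij 0 = 1 := by
  apply Units.ext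
  rw [elemGL_coe, Matrix.transvection_zero]
  rfl

lemma transvection_apply' (a b : Fin n) (c : ℚ_[p]) (x y : Fin n) :
    Matrix.transvection a b c x y
      = (if x = y then 1 else 0) + (if a = x ∧ b = y then c else 0) := by
  simp [Matrix.transvection, Matrix.single, Matrix.one_apply, Matrix.add_apply]

/-- An explicit diagonal element of `GL n ℚ_[p]`. -/
noncomputable def diagGL (h : Fin n → ℚ_[p]) (hh : ∀ x, h x ≠ 0) : GL (Fin n) ℚ_[p] :=
  ⟨Matrix.diagonal h, Matrix.diagonal fun x => (h x)⁻¹,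
    by
      rw [Matrix.diagonal_mul_diagonal]
      have : (fun x => h x * (h x)⁻¹) = fun _ : Fin n => (1 : ℚ_[p]) :=
        funext fun x => mul_inv_cancel₀ (hh x)
      rw [this, Matrix.diagonal_one],
    by
      rw [Matrix.diagonal_mul_diagonal]
      have : (fun x => (h x)⁻¹ * h x) = fun _ : Fin n => (1 : ℚ_[p]) :=
        funext fun x => inv_mul_cancel₀ (hh x)
      rw [this, Matrix.diagonal_one]⟩

lemma diagGL_coe (h : Fin n → ℚ_[p]) (hh : ∀ x, h x ≠ 0) :
    (diagGL p n h hh : Matrix (Fin n) (Fin n) ℚ_[p]) = Matrix.diagonal h := rfl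

lemma diagGL_inv_coe (h : Fin n → ℚ_[p]) (hh : ∀ x, h x ≠ 0) :
    (((diagGL p n h hh)⁻¹ : GL (Fin n) ℚ_[p]) : Matrix (Fin n) (Fin n) ℚ_[p])
      = Matrix.diagonal fun x => (h x)⁻¹ := rfl

lemma mul_norm_le_one {a b : ℚ_[p]} (ha : ‖a‖ ≤ 1) (hb : ‖b‖ ≤ 1) : ‖a * b‖ ≤ 1 := by
  rw [norm_mul]
  calc ‖a‖ * ‖b‖ ≤ 1 * 1 := mul_le_mul ha hb (norm_nonneg _) zero_le_one
  _ = 1 := mul_one 1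

lemma elemGL_mem_N (a b : Fin n) (hab : a < b) (c : ℚ_[p]) :
    elemGL p n a b hab.ne c ∈ Nset p n := by
  constructor
  · intro x
    show Matrix.transvection a b c x x = 1
    rw [transvection_apply', if_pos rfl, if_neg, add_zero]
    rintro ⟨rfl, rfl⟩
    exact absurd rfl hab.ne
  · intro x y hyx
    show Matrix.transvection a b c x y = 0
    rw [transvection_apply', if_neg (ne_of_gt hyx), if_neg, add_zero]
    rintro ⟨rfl, rfl⟩
    exact absurd hab (not_lt_of_gt hyx)

lemma psiN_elemGL (ψ₀ : ℚ_[p] → ℂ) (hψtriv : ∀ x : ℚ_[p], ‖x‖ ≤ 1 → ψ₀ x = 1)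
    (a b : Fin n) (hab : a ≠ b) (c : ℚ_[p]) (hc : ‖c‖ ≤ 1) :
    psiN p n ψ₀ (elemGL p n a b hab c) = 1 := by
  unfold psiN
  apply Finset.prod_eq_one
  intro k _
  by_cases hk : (k : ℕ) + 1 < n
  · rw [dif_pos hk]
    apply hψtriv
    have he : entry p n (elemGL p n a b hab c) k (finSucc n k hk)
        = Matrix.transvection a b c k (finSucc n k hk) := rfl
    rw [he, transvection_apply', if_neg (finSucc_ne n k hk), zero_add]
    split_ifs
    · exact hc
    · simp
  · rw [dif_neg hk]

lemma transvection_entry_norm_le (i i' : Fin n) (hne : i ≠ i') (u : ℚ_[p]) (hu : ‖u‖ ≤ 1)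
    (x y : Fin n) : ‖Matrix.transvection i i' u x y‖ ≤ 1 := by
  rw [transvection_apply']
  rcases eq_or_ne x y with rfl | hxy
  · rw [if_pos rfl, if_neg, add_zero, norm_one]
    rintro ⟨rfl, rfl⟩
    exact hne rfl
  · rw [if_neg hxy, zero_add]
    split_ifs
    · exact hu
    · simp

lemma jGL_mem (h : Fin n → ℚ_[p]) (hh : ∀ x, h x ≠ 0) (hh1 : ∀ x, ‖h x‖ ≤ 1)
    (hh2 : ∀ x, ‖(h x)⁻¹‖ ≤ 1) (i i' : Fin n) (hii : i < i') (u : ℚ_[p]) (hu : ‖u‖ ≤ 1) :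
    diagGL p n h hh * elemGL p n i i' hii.ne u ∈ Jset p n := by
  have hcoe : ((diagGL p n h hh * elemGL p n i i' hii.ne u : GL (Fin n) ℚ_[p]) :
      Matrix (Fin n) (Fin n) ℚ_[p]) = Matrix.diagonal h * Matrix.transvection i i' u := rfl
  have hinv : (((diagGL p n h hh * elemGL p n i i' hii.ne u)⁻¹ : GL (Fin n) ℚ_[p]) :
      Matrix (Fin n) (Fin n) ℚ_[p])
      = Matrix.transvection i i' (-u) * Matrix.diagonal fun x => (h x)⁻¹ := by
    rw [_root_.mul_inv_rev, elemGL_inv]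
    rfl
  refine ⟨?_, ?_, ?_⟩
  · intro x y
    simp only [entry]
    rw [hcoe, Matrix.diagonal_mul]
    exact mul_norm_le_one p (hh1 x)
      (transvection_entry_norm_le p n i i' hii.ne u hu x y)
  · intro x y
    simp only [entry]
    rw [hinv, Matrix.mul_diagonal]
    exact mul_norm_le_one p
      (transvection_entry_norm_le p n i i' hii.ne (-u) (by rw [norm_neg]; exact hu) x y)
      (hh2 y)
  · intro x y hyx
    simp only [entry]
    rw [hcoe, Matrix.diagonal_mul, transvection_apply', if_neg (ne_of_gt hyx), if_neg, add_zero,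
      mul_zero, norm_zero]
    · exact zero_lt_one
    · rintro ⟨rfl, rfl⟩
      exact absurd hii (not_lt_of_gt hyx)

lemma norm_div_le_one (x y : ℚ_[p]) (hx : x ≠ 0) (hy : y ≠ 0)
    (h : y.valuation ≤ x.valuation) : ‖x / y‖ ≤ 1 := by
  have hp1 : (1 : ℝ) < (p : ℝ) := by
    exact_mod_cast (Fact.out : p.Prime).one_lt
  rw [norm_div, Padic.norm_eq_zpow_neg_valuation hx, Padic.norm_eq_zpow_neg_valuation hy,
    ← zpow_sub₀ (by positivity)]
  exact zpow_le_one_of_nonpos₀ hp1.le (by omega)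

lemma residue_norm_one (t : Fin p) (ht : t ≠ 0) : ‖((t : ℕ) : ℚ_[p])‖ = 1 := by
  haveI : NeZero p := ⟨(Fact.out : p.Prime).ne_zero⟩
  have h1 : ‖((t : ℕ) : ℚ_[p])‖ ≤ 1 := by
    have := Padic.norm_int_le_one (p := p) ((t : ℕ) : ℤ)
    push_cast at this
    exact this
  have h2 : ¬ ‖((t : ℕ) : ℚ_[p])‖ < 1 := by
    intro hlt
    have hlt' : ‖((((t : ℕ) : ℤ)) : ℚ_[p])‖ < 1 := by push_cast; exact hlt
    rw [Padic.norm_intCast_lt_one_iff] at hlt'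
    have hdvd : p ∣ (t : ℕ) := by exact_mod_cast hlt'
    have htpos : 0 < (t : ℕ) := Nat.pos_of_ne_zero (by
      intro h0
      exact ht (by
        apply Fin.ext
        simpa using h0))
    have := Nat.le_of_dvd htpos hdvd
    omega
  exact le_antisymm h1 (not_lt.mp h2)

/-! ### Permutation combinatorics -/

theorem Equiv.Perm.apply_inv_self (σ : Equiv.Perm (Fin n)) (x : Fin n) : σ (σ⁻¹ x) = x :=
  Equiv.apply_symm_apply σ x

theorem Equiv.Perm.inv_apply_self (σ : Equiv.Perm (Fin n)) (x : Fin n) : σ⁻¹ (σ x) = x :=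
  Equiv.symm_apply_apply σ x

lemma perm_eq_one_of_strictMono (σ : Equiv.Perm (Fin n)) (h : StrictMono (σ : Fin n → Fin n)) :
    σ = 1 := by
  haveI : WellFoundedLT (Fin n) := Finite.to_wellFoundedLT
  have h2 : StrictMono ((σ⁻¹ : Equiv.Perm (Fin n)) : Fin n → Fin n) := by
    intro a b hab
    rcases lt_trichotomy ((σ⁻¹ : Equiv.Perm (Fin n)) a) ((σ⁻¹ : Equiv.Perm (Fin n)) b)
      with h' | h' | h'
    · exact h'
    · exfalso
      have hab' : a = b := by
        have := congrArg σ h'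
        rwa [Equiv.Perm.apply_inv_self, Equiv.Perm.apply_inv_self] at this
      exact hab.ne hab'
    · exfalso
      have := h h'
      rw [Equiv.Perm.apply_inv_self, Equiv.Perm.apply_inv_self] at this
      exact absurd this (not_lt_of_gt hab)
  apply Equiv.ext
  intro x
  have hx1 : x ≤ σ x := h.le_apply
  have hx2 : σ x ≤ σ⁻¹ (σ x) := h2.le_apply
  rw [Equiv.Perm.inv_apply_self] at hx2
  simp only [Equiv.Perm.one_apply]
  exact le_antisymm hx2 hx1

lemma len_one : len n 1 = 0 := by
  rw [len, Finset.card_eq_zero, Finset.eq_empty_iff_forall_notMem]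
  intro q hq
  rw [InvSet, Finset.mem_filter] at hq
  obtain ⟨-, h1, h2⟩ := hq
  simp only [inv_one, Equiv.Perm.one_apply] at h2
  exact absurd (h1.trans h2) (lt_irrefl _)

lemma eq_one_of_len_zero (σ : Equiv.Perm (Fin n)) (h : len n σ = 0) : σ = 1 := by
  rw [len, Finset.card_eq_zero] at h
  have hinv : StrictMono ((σ⁻¹ : Equiv.Perm (Fin n)) : Fin n → Fin n) := by
    intro a b hab
    by_contra hc
    push_neg at hc
    have hne : σ⁻¹ b ≠ σ⁻¹ a := fun he => hab.ne (σ⁻¹.injective he).symm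
    have hlt : σ⁻¹ b < σ⁻¹ a := lt_of_le_of_ne hc hne
    have hmem : (a, b) ∈ InvSet n σ := by
      rw [InvSet, Finset.mem_filter]
      exact ⟨Finset.mem_univ _, hab, hlt⟩
    rw [h] at hmem
    exact absurd hmem (Finset.notMem_empty _)
  have : σ⁻¹ = 1 := perm_eq_one_of_strictMono n σ⁻¹ hinv
  rw [← inv_inv σ, this, inv_one]

lemma exists_descent (σ : Equiv.Perm (Fin n)) (hσ : σ ≠ 1) :
    ∃ (i : Fin n) (h : (i : ℕ) + 1 < n), σ (finSucc n i h) < σ i := by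
  by_contra hc
  push_neg at hc
  have hadj : ∀ a b : Fin n, (b : ℕ) = (a : ℕ) + 1 → σ a < σ b := by
    intro a b hb
    have h1 : (a : ℕ) + 1 < n := by
      have := b.isLt
      omega
    have hab : b = finSucc n a h1 := Fin.ext (by simpa [finSucc] using hb)
    rw [hab]
    rcases (hc a h1).lt_or_eq with h' | h'
    · exact h'
    · exact absurd (σ.injective h') (finSucc_ne n a h1)
  have key : ∀ (k : ℕ) (a b : Fin n), (b : ℕ) = (a : ℕ) + k + 1 → σ a < σ b := by
    intro k
    induction k with
    | zero =>
      intro a b hb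
      exact hadj a b (by omega)
    | succ k ihk =>
      intro a b hb
      have hmlt : (a : ℕ) + k + 1 < n := by
        have := b.isLt
        omega
      exact (ihk a ⟨(a : ℕ) + k + 1, hmlt⟩ rfl).trans
        (hadj ⟨(a : ℕ) + k + 1, hmlt⟩ b (by simp; omega))
  have hmono : StrictMono (σ : Fin n → Fin n) := by
    intro a b hab
    have hval : (a : ℕ) < (b : ℕ) := hab
    exact key ((b : ℕ) - (a : ℕ) - 1) a b (by omega)
  exact hσ (perm_eq_one_of_strictMono n σ hmono)

end Aux


lemma swap_lt_iff (i i' : Fin n) (hii : (i' : ℕ) = (i : ℕ) + 1) (u v : Fin n) :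
    Equiv.swap i i' v < Equiv.swap i i' u ↔
      ((v < u ∧ ¬(v = i ∧ u = i')) ∨ (v = i' ∧ u = i)) := by
  rw [Equiv.swap_apply_def, Equiv.swap_apply_def]
  split_ifs <;> (simp only [Fin.lt_def, Fin.ext_iff] at *) <;> omega

lemma len_descent (σ : Equiv.Perm (Fin n)) (i i' : Fin n) (hii : (i' : ℕ) = (i : ℕ) + 1)
    (hd : σ i' < σ i) : len n (σ * Equiv.swap i i') + 1 = len n σ := by
  have hlt : i < i' := by
    rw [Fin.lt_def]
    omega
  have happ : ∀ x : Fin n, (σ * Equiv.swap i i')⁻¹ x = Equiv.swap i i' (σ⁻¹ x) := by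
    intro x
    rw [_root_.mul_inv_rev, Equiv.Perm.mul_apply, Equiv.swap_inv]
  have hmem : (σ i', σ i) ∈ InvSet n σ := by
    rw [InvSet, Finset.mem_filter]
    refine ⟨Finset.mem_univ _, hd, ?_⟩
    rw [Equiv.Perm.inv_apply_self, Equiv.Perm.inv_apply_self]
    exact hlt
  have hset : InvSet n (σ * Equiv.swap i i') = (InvSet n σ).erase (σ i', σ i) := by
    ext q
    obtain ⟨a, b⟩ := q
    rw [InvSet, InvSet, Finset.mem_erase, Finset.mem_filter, Finset.mem_filter]
    simp only [Finset.mem_univ, true_and, happ, Prod.mk.injEq, ne_eq, not_and]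
    rw [swap_lt_iff n i i' hii]
    constructor
    · rintro ⟨hab, (⟨h1, h2⟩ | ⟨h1, h2⟩)⟩
      · refine ⟨?_, hab, h1⟩
        intro ha hb
        exact h2 ⟨by rw [hb, Equiv.Perm.inv_apply_self], by rw [ha, Equiv.Perm.inv_apply_self]⟩
      · exfalso
        have ha : a = σ i := by
          have := congrArg σ h2
          rwa [Equiv.Perm.apply_inv_self] at this
        have hb : b = σ i' := by
          have := congrArg σ h1
          rwa [Equiv.Perm.apply_inv_self] at this
        rw [ha, hb] at hab
        exact absurd (hab.trans hd) (lt_irrefl _)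
    · rintro ⟨hne', hab, hlt'⟩
      refine ⟨hab, Or.inl ⟨hlt', ?_⟩⟩
      rintro ⟨h1, h2⟩
      have ha : a = σ i' := by
        have := congrArg σ h2
        rwa [Equiv.Perm.apply_inv_self] at this
      have hb : b = σ i := by
        have := congrArg σ h1
        rwa [Equiv.Perm.apply_inv_self] at this
      exact hne' ha hb
  rw [len, len, hset, Finset.card_erase_of_mem hmem]
  have hpos : 0 < (InvSet n σ).card := Finset.card_pos.mpr ⟨_, hmem⟩
  omega

/-- The key matrix identity underlying the Hecke-operator computation. -/
lemma key_mat (D : Fin n → ℚ_[p]) (σ : Equiv.Perm (Fin n)) (i i' : Fin n)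
    (hii : i ≠ i') (t : ℚ_[p]) (ht : t ≠ 0) (hDa : D (σ i') ≠ 0) (hDb : D (σ i) ≠ 0)
    (h : Fin n → ℚ_[p]) (hhi : h i = t) (hhi' : h i' = -t⁻¹)
    (hho : ∀ z, z ≠ i → z ≠ i' → h z = 1) :
    Matrix.diagonal D * (σ.permMatrix ℚ_[p])ᵀ * Matrix.transvection i i' t *
        ((Equiv.swap i i').permMatrix ℚ_[p])ᵀ =
      Matrix.transvection (σ i') (σ i) (t⁻¹ * (D (σ i') / D (σ i))) *
        (Matrix.diagonal D * (σ.permMatrix ℚ_[p])ᵀ * Matrix.diagonal h *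
          Matrix.transvection i i' t⁻¹) := by
  have hinj : ∀ u v : Fin n, σ u = σ v ↔ u = v := fun u v => σ.injective.eq_iff
  set A : Matrix (Fin n) (Fin n) ℚ_[p] := Matrix.diagonal D * (σ.permMatrix ℚ_[p])ᵀ with hA
  have hAe : ∀ x z, A x z = if x = σ z then D x else 0 := by
    intro x z
    rw [hA, mul_permT, Matrix.diagonal_apply]
  have hE1 : ∀ x z, (A * Matrix.diagonal h) x z = (if x = σ z then D x else 0) * h z := by
    intro x z
    rw [Matrix.mul_diagonal, hAe]
  have hE2 : ∀ x z, (A * Matrix.diagonal h * Matrix.transvection i i' t⁻¹) x z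
      = (if x = σ z then D x else 0) * h z
        + (if z = i' then t⁻¹ * ((if x = σ i then D x else 0) * h i) else 0) := by
    intro x z
    rcases eq_or_ne z i' with rfl | hz
    · rw [if_pos rfl, Matrix.mul_transvection_apply_same, hE1, hE1]
    · rw [if_neg hz, Matrix.mul_transvection_apply_of_ne (hb := hz), hE1, add_zero]
  ext x y
  rw [mul_permT]
  have hLHS : (A * Matrix.transvection i i' t) x (Equiv.swap i i' y)
      = A x (Equiv.swap i i' y)
        + (if Equiv.swap i i' y = i' then t * A x i else 0) := by
    rcases eq_or_ne (Equiv.swap i i' y) i' with hsy | hsy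
    · rw [hsy, if_pos rfl, Matrix.mul_transvection_apply_same]
    · rw [if_neg hsy, Matrix.mul_transvection_apply_of_ne (hb := hsy), add_zero]
  have hRHS : (Matrix.transvection (σ i') (σ i) (t⁻¹ * (D (σ i') / D (σ i))) *
        (A * Matrix.diagonal h * Matrix.transvection i i' t⁻¹)) x y
      = (A * Matrix.diagonal h * Matrix.transvection i i' t⁻¹) x y
        + (if x = σ i' then (t⁻¹ * (D (σ i') / D (σ i))) *
            (A * Matrix.diagonal h * Matrix.transvection i i' t⁻¹) (σ i) y else 0) := by
    rcases eq_or_ne x (σ i') with hx | hx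
    · rw [if_pos hx, hx, Matrix.transvection_mul_apply_same]
    · rw [if_neg hx, Matrix.transvection_mul_apply_of_ne (ha := hx), add_zero]
  rw [hLHS, hRHS, hE2, hE2, hAe, hAe]
  have hσii' : (σ i = σ i') = False := eq_false fun hc => hii ((hinj i i').mp hc)
  have hσi'i : (σ i' = σ i) = False := eq_false fun hc => hii ((hinj i' i).mp hc).symm
  by_cases hyi : y = i
  · rw [hyi]
    have e2 : (i = i') = False := eq_false hii
    simp only [Equiv.swap_apply_left, eq_self_iff_true, if_true, e2, if_false, hhi, add_zero]
    by_cases hx : x = σ i'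
    · rw [hx]
      simp only [eq_self_iff_true, if_true, hσi'i, if_false, zero_mul, zero_add, mul_zero,
        add_zero]
      field_simp
      try ring
      try exact Or.inl (mul_comm _ _)
      try exact Or.inl trivial
    · simp only [if_neg hx, add_zero]
      by_cases hx2 : x = σ i
      · simp only [if_pos hx2, zero_add, add_zero]
        ring
      · simp only [if_neg hx2, mul_zero, zero_mul, add_zero, zero_add]
  · by_cases hyi' : y = i'
    · rw [hyi']
      have e2 : (i' = i) = False := eq_false fun hc => hii hc.symm
      have e2' : (i = i') = False := eq_false hii
      simp only [Equiv.swap_apply_right, eq_self_iff_true, if_true, e2, e2', if_false, hhi, hhi',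
        hσii', zero_mul, zero_add, add_zero]
      by_cases hx : x = σ i'
      · rw [hx]
        simp only [eq_self_iff_true, if_true, hσi'i, if_false, zero_mul, mul_zero, zero_add,
          add_zero]
        field_simp
        ring
      · simp only [if_neg hx, add_zero, zero_mul, zero_add]
        by_cases hx2 : x = σ i
        · simp only [if_pos hx2, zero_mul, zero_add]
          field_simp
        · simp only [if_neg hx2, mul_zero, zero_mul, add_zero, zero_add]
    · rw [Equiv.swap_apply_of_ne_of_ne hyi hyi']
      have e2 : (y = i') = False := eq_false hyi'
      have e3 : (σ i = σ y) = False := eq_false fun hc => hyi ((hinj i y).mp hc).symm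
      simp only [e2, if_false, hho y hyi hyi', mul_one, e3, zero_mul, mul_zero, add_zero,
        zero_add, ite_self]

/-- If in addition `W` satisfies the sign Hecke relations, then for `σ ∈ S_n` and
`d ∈ T⁺`: `W(d·w_σ) = (-p)^{-ℓ(σ)}·W(d)`. -/
theorem whittaker_perm_relation (hn : 2 ≤ n)
    (ψ₀ : ℚ_[p] → ℂ)
    (hψadd : ∀ x y : ℚ_[p], ψ₀ (x + y) = ψ₀ x * ψ₀ y)
    (hψtriv : ∀ x : ℚ_[p], ‖x‖ ≤ 1 → ψ₀ x = 1)
    (hψnontriv : ∃ x : ℚ_[p], ‖x‖ ≤ (p : ℝ) ∧ ψ₀ x ≠ 1)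
    (W : GL (Fin n) ℚ_[p] → ℂ)
    (hWN : ∀ u ∈ Nset p n, ∀ g : GL (Fin n) ℚ_[p], W (u * g) = psiN p n ψ₀ u * W g)
    (hWJ : ∀ g : GL (Fin n) ℚ_[p], ∀ j ∈ Jset p n, W (g * j) = W g)
    (hHecke : ∀ (i : Fin n) (h : (i : ℕ) + 1 < n) (g : GL (Fin n) ℚ_[p]),
      ∑ t : Fin p,
        W (g * elemGL p n i (finSucc n i h) (finSucc_ne n i h) ((t : ℕ) : ℚ_[p])
              * permGL p n (Equiv.swap i (finSucc n i h)))
        = -W g)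
    (σ : Equiv.Perm (Fin n)) (d : GL (Fin n) ℚ_[p]) (hd : d ∈ Tplus p n) :
    W (d * permGL p n σ) = (-(p : ℂ)) ^ (-(len n σ : ℤ)) * W d := by
  haveI : NeZero p := ⟨(Fact.out : p.Prime).ne_zero⟩
  obtain ⟨hdT, hdom⟩ := hd
  have hdcoe : (d : Matrix (Fin n) (Fin n) ℚ_[p])
      = Matrix.diagonal fun k => entry p n d k k := by
    ext x y
    rcases eq_or_ne x y with rfl | hxy
    · rw [Matrix.diagonal_apply_eq]
      rfl
    · rw [Matrix.diagonal_apply_ne _ hxy]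
      exact hdT x y hxy
  have hdk : ∀ k : Fin n, entry p n d k k ≠ 0 := by
    have hdet : ((d : Matrix (Fin n) (Fin n) ℚ_[p])).det ≠ 0 :=
      (Matrix.isUnits_det_units d).ne_zero
    rw [hdcoe, Matrix.det_diagonal] at hdet
    intro k hk
    exact hdet (Finset.prod_eq_zero (Finset.mem_univ k) hk)
  have hnegp : (-(p : ℂ)) ≠ 0 :=
    neg_ne_zero.mpr (Nat.cast_ne_zero.mpr (Fact.out : p.Prime).ne_zero)
  suffices H : ∀ (k : ℕ) (σ : Equiv.Perm (Fin n)), len n σ = k →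
      W (d * permGL p n σ) = (-(p : ℂ)) ^ (-(k : ℤ)) * W d by
    exact H (len n σ) σ rfl
  intro k
  induction k using Nat.strong_induction_on with
  | _ k ih =>
    intro σ hlen
    rcases Nat.eq_zero_or_pos k with rfl | hkpos
    · rw [eq_one_of_len_zero n σ hlen, permGL_one, mul_one]
      norm_num
    · have hσ1 : σ ≠ 1 := by
        intro h1
        rw [h1, len_one] at hlen
        omega
      obtain ⟨i, hsucc, hdesc⟩ := exists_descent n σ hσ1
      have hii_val : (((finSucc n i hsucc) : Fin n) : ℕ) = (i : ℕ) + 1 := rfl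
      have hne : i ≠ (finSucc n i hsucc) := finSucc_ne n i hsucc
      have hlt : i < (finSucc n i hsucc) := by
        rw [Fin.lt_def]
        omega
      have hlen' : len n (σ * Equiv.swap i (finSucc n i hsucc)) + 1 = k := by
        rw [← hlen]
        exact len_descent n σ i (finSucc n i hsucc) hii_val hdesc
      have hihσ' : W (d * permGL p n (σ * Equiv.swap i (finSucc n i hsucc)))
          = (-(p : ℂ)) ^ (-((len n (σ * Equiv.swap i (finSucc n i hsucc)) : ℕ) : ℤ)) * W d :=
        ih (len n (σ * Equiv.swap i (finSucc n i hsucc))) (by omega) (σ * Equiv.swap i (finSucc n i hsucc)) rfl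
      have heq := hHecke i hsucc (d * permGL p n σ)
      have hterm : ∀ t : Fin p,
          W (d * permGL p n σ * elemGL p n i (finSucc n i hsucc) (finSucc_ne n i hsucc) ((t : ℕ) : ℚ_[p])
              * permGL p n (Equiv.swap i (finSucc n i hsucc)))
            = if t = 0 then W (d * permGL p n (σ * Equiv.swap i (finSucc n i hsucc))) else W (d * permGL p n σ) := by
        intro t
        rcases eq_or_ne t 0 with rfl | ht
        · rw [if_pos rfl]
          have h0 : (((0 : Fin p) : ℕ) : ℚ_[p]) = 0 := by norm_num
          rw [h0, elemGL_zero, mul_one, mul_assoc, permGL_mul]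
        · rw [if_neg ht]
          set tc : ℚ_[p] := ((t : ℕ) : ℚ_[p]) with htc_def
          have htc : ‖tc‖ = 1 := residue_norm_one p t ht
          have htc0 : tc ≠ 0 := by
            intro h0
            rw [h0, norm_zero] at htc
            norm_num at htc
          have hab : σ (finSucc n i hsucc) < σ i := hdesc
          have hcle : ‖tc⁻¹ * (entry p n d (σ (finSucc n i hsucc)) (σ (finSucc n i hsucc)) / entry p n d (σ i) (σ i))‖ ≤ 1 := by
            rw [norm_mul, norm_inv, htc, inv_one, one_mul]
            exact norm_div_le_one p _ _ (hdk (σ (finSucc n i hsucc))) (hdk (σ i)) (hdom hab.le)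
          have hh0 : ∀ x : Fin n,
              (fun x => if x = i then tc else if x = (finSucc n i hsucc) then -tc⁻¹ else 1) x ≠ 0 := by
            intro x
            dsimp only
            split_ifs
            · exact htc0
            · simp [htc0]
            · exact one_ne_zero
          have hh1 : ∀ x : Fin n,
              ‖(fun x => if x = i then tc else if x = (finSucc n i hsucc) then -tc⁻¹ else 1) x‖ ≤ 1 := by
            intro x
            dsimp only
            split_ifs
            · exact htc.le
            · rw [norm_neg, norm_inv, htc, inv_one]
            · rw [norm_one]
          have hh2 : ∀ x : Fin n,
              ‖((fun x => if x = i then tc else if x = (finSucc n i hsucc) then -tc⁻¹ else 1) x)⁻¹‖ ≤ 1 := by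
            intro x
            dsimp only
            split_ifs
            · rw [norm_inv, htc, inv_one]
            · rw [inv_neg, norm_neg, inv_inv, htc]
            · rw [inv_one, norm_one]
          have hGLid : d * permGL p n σ * elemGL p n i (finSucc n i hsucc) (finSucc_ne n i hsucc) tc *
              permGL p n (Equiv.swap i (finSucc n i hsucc))
              = elemGL p n (σ (finSucc n i hsucc)) (σ i) hdesc.ne
                  (tc⁻¹ * (entry p n d (σ (finSucc n i hsucc)) (σ (finSucc n i hsucc)) / entry p n d (σ i) (σ i))) *
                (d * permGL p n σ *
                  diagGL p n (fun x => if x = i then tc else if x = (finSucc n i hsucc) then -tc⁻¹ else 1) hh0 *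
                  elemGL p n i (finSucc n i hsucc) (finSucc_ne n i hsucc) tc⁻¹) := by
            apply Units.ext
            simp only [Units.val_mul, permGL_coe, elemGL_coe, diagGL_coe]
            rw [hdcoe]
            exact key_mat p n (fun k => entry p n d k k) σ i (finSucc n i hsucc) hne tc htc0
              (hdk (σ (finSucc n i hsucc))) (hdk (σ i))
              (fun x => if x = i then tc else if x = finSucc n i hsucc then -tc⁻¹ else 1)
              (by rw [if_pos rfl])
              (by rw [if_neg (Ne.symm (finSucc_ne n i hsucc)), if_pos rfl])
              (fun z hz1 hz2 => by rw [if_neg hz1, if_neg hz2])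
          rw [hGLid, mul_assoc (d * permGL p n σ),
            hWN _ (elemGL_mem_N p n (σ (finSucc n i hsucc)) (σ i) hdesc _) _,
            hWJ _ _ (jGL_mem p n _ hh0 hh1 hh2 i (finSucc n i hsucc) hlt tc⁻¹
              (by rw [norm_inv, htc, inv_one])),
            psiN_elemGL p n ψ₀ hψtriv (σ (finSucc n i hsucc)) (σ i) hdesc.ne _ hcle, one_mul]
      have hsum : (∑ t : Fin p,
          W (d * permGL p n σ * elemGL p n i (finSucc n i hsucc) (finSucc_ne n i hsucc) ((t : ℕ) : ℚ_[p])
              * permGL p n (Equiv.swap i (finSucc n i hsucc))))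
          = W (d * permGL p n (σ * Equiv.swap i (finSucc n i hsucc))) + ((p : ℂ) - 1) * W (d * permGL p n σ) := by
        rw [Finset.sum_congr rfl fun t _ => hterm t]
        have hstep : ∀ t : Fin p,
            (if t = 0 then W (d * permGL p n (σ * Equiv.swap i (finSucc n i hsucc))) else W (d * permGL p n σ))
              = W (d * permGL p n σ) +
                (if t = 0 then W (d * permGL p n (σ * Equiv.swap i (finSucc n i hsucc))) - W (d * permGL p n σ) else 0) := by
          intro t
          split_ifs <;> ring
        rw [Finset.sum_congr rfl fun t _ => hstep t, Finset.sum_add_distrib,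
          Finset.sum_const, Finset.sum_ite_eq' Finset.univ (0 : Fin p)]
        simp only [Finset.mem_univ, if_pos, Finset.card_univ, Fintype.card_fin, nsmul_eq_mul]
        ring
      have heq2 : W (d * permGL p n (σ * Equiv.swap i (finSucc n i hsucc))) + ((p : ℂ) - 1) * W (d * permGL p n σ)
          = - W (d * permGL p n σ) := by
        rw [← hsum]
        exact heq
      have hABl : W (d * permGL p n (σ * Equiv.swap i (finSucc n i hsucc))) = -(p : ℂ) * W (d * permGL p n σ) := by
        linear_combination heq2
      have hzp : (-(p : ℂ)) ^ (-(k : ℤ))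
          = (-(p : ℂ))⁻¹ * (-(p : ℂ)) ^ (-((len n (σ * Equiv.swap i (finSucc n i hsucc)) : ℕ) : ℤ)) := by
        rw [← _root_.zpow_neg_one, ← zpow_add₀ hnegp]
        congr 1
        omega
      rw [hzp, mul_assoc, ← hihσ', hABl, inv_mul_cancel_left₀ hnegp]
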